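/- arXiv:1204.0590 — 2 statements merged into one kernel-verified Lean document; each statement's English description precedes it below -/
import Mathlib

section
/- Let H be as above (finite atomic combination with poles in the disk of radius ρ < 1) and let θ_k = 2πk/n for k = 0,…,n-1. Then the squared H² norm (1/2π)∫₀^{2π}|H(e^{iθ})|² dθ is bounded above by (1/n)Σ_{k=0}^{n-1}|H(e^{iθ_k})|² + (4π/n)·((1+ρ)/(1-ρ))·(Σ_w |c_w|)². -/
open scoped Real
open Complex

lemma abs_exp_mul_I_sub_one_le (t : ℝ) :
    ‖Complex.exp (t * I) - 1‖ ≤ |t| := by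
  have h : ‖Complex.exp (t * I) - 1‖ ^ 2 = (Real.cos t - 1)^2 + Real.sin t ^ 2 := by
    rw [Complex.sq_norm, Complex.normSq_apply]
    simp [Complex.exp_ofReal_mul_I_re, Complex.exp_ofReal_mul_I_im]; ring
  have hc : 1 - t^2/2 ≤ Real.cos t := Real.one_sub_sq_div_two_le_cos
  have hs : Real.sin t ^ 2 + Real.cos t ^2 = 1 := Real.sin_sq_add_cos_sq t
  have h2 : ‖Complex.exp (t * I) - 1‖ ^ 2 ≤ |t| ^ 2 := by
    rw [h, _root_.sq_abs]; nlinarith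
  have := norm_nonneg (Complex.exp (t * I) - 1)
  nlinarith [abs_nonneg t]

lemma abs_exp_sub_exp_le (a b : ℝ) :
    ‖Complex.exp (a * I) - Complex.exp (b * I)‖ ≤ |a - b| := by
  have key : Complex.exp (a * I) - Complex.exp (b * I)
      = Complex.exp (b * I) * (Complex.exp ((a - b : ℝ) * I) - 1) := by
    push_cast
    rw [mul_sub, mul_one, ← Complex.exp_add]
    ring_nf
  rw [key, norm_mul, Complex.norm_exp_ofReal_mul_I, one_mul]
  exact abs_exp_mul_I_sub_one_le (a - b)

set_option maxHeartbeats 1000000 in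
theorem h2_norm_discretization_bound (ρ : ℝ) (hρ0 : 0 ≤ ρ) (hρ : ρ < 1)
    (W : Finset ℂ) (hW : ∀ w ∈ W, ‖w‖ ≤ ρ) (c : ℂ → ℂ)
    (n : ℕ) (hn : 1 ≤ n)
    (H : ℂ → ℂ)
    (hH : ∀ z : ℂ, H z = ∑ w ∈ W, c w * (1 - (‖w‖ : ℂ)^2) / (z - w)) :
    (1 / (2 * π)) * ∫ θ in (0:ℝ)..(2 * π), (‖H (Complex.exp (θ * Complex.I))‖)^2
      ≤ (1 / n) * ∑ k ∈ Finset.range n,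
            (‖H (Complex.exp ((2 * π * k / n) * Complex.I))‖)^2
        + (4 * π / n) * ((1 + ρ) / (1 - ρ)) * (∑ w ∈ W, ‖c w‖)^2 := by
  have hρ1 : (0:ℝ) < 1 - ρ := by linarith
  set S : ℝ := ∑ w ∈ W, ‖c w‖ with hSdef
  have hS0 : 0 ≤ S := Finset.sum_nonneg fun w _ => norm_nonneg _
  set r : ℝ := (1 + ρ) / (1 - ρ) with hrdef
  have hr0 : 0 ≤ r := by positivity
  set B : ℝ := (1 + ρ) * S with hBdef
  set M : ℝ := r * S with hMdef
  set L : ℝ := 4 * r * S ^ 2 with hLdef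
  set zf : ℝ → ℂ := fun θ => Complex.exp (θ * Complex.I) with hzf
  have hzabs : ∀ θ : ℝ, ‖zf θ‖ = 1 := fun θ => Complex.norm_exp_ofReal_mul_I θ
  set f : ℝ → ℝ := fun θ => (‖H (zf θ)‖)^2 with hf
  -- denominator bounds
  have hsub : ∀ (z : ℂ), ‖z‖ = 1 → ∀ w ∈ W,
      1 - ‖w‖ ≤ ‖z - w‖ := by
    intro z hz w hw
    have := norm_sub_norm_le z w
    simpa [hz] using this
  have hsubρ : ∀ (z : ℂ), ‖z‖ = 1 → ∀ w ∈ W,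
      (0:ℝ) < ‖z - w‖ := by
    intro z hz w hw
    have h1 := hsub z hz w hw
    have h2 := hW w hw
    linarith
  -- abs of numerator
  have hA : ∀ w ∈ W, ‖1 - (‖w‖ : ℂ)^2‖ = 1 - (‖w‖)^2 := by
    intro w hw
    have h2 := hW w hw
    have h5 : (0:ℝ) ≤ 1 - ‖w‖ ^ 2 := by nlinarith [norm_nonneg w]
    have : ((1:ℂ) - (‖w‖ : ℂ)^2) = ((1 - (‖w‖)^2 : ℝ) : ℂ) := by
      push_cast; ring
    rw [this, Complex.norm_of_nonneg h5]
  -- pointwise bound on H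
  have hHabs : ∀ θ : ℝ, ‖H (zf θ)‖ ≤ B := by
    intro θ
    rw [hH]
    refine le_trans (norm_sum_le _ _) ?_
    have hterm : ∀ w ∈ W, ‖c w * (1 - (‖w‖ : ℂ)^2) / (zf θ - w)‖
        ≤ (1 + ρ) * ‖c w‖ := by
      intro w hw
      rw [norm_div, norm_mul, hA w hw, div_le_iff₀ (hsubρ _ (hzabs θ) w hw)]
      have h1 := hsub _ (hzabs θ) w hw
      have h2 := hW w hw
      have h3 := norm_nonneg (c w)
      have h4 := norm_nonneg w
      nlinarith [mul_le_mul_of_nonneg_left h1 (mul_nonneg (by linarith : (0:ℝ) ≤ 1 + ρ) h3),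
        mul_nonneg h3 (mul_nonneg (sub_nonneg.2 h2) (by linarith : (0:ℝ) ≤ 1 - ‖w‖))]
    refine le_trans (Finset.sum_le_sum hterm) ?_
    rw [← Finset.mul_sum, hBdef]
  -- Lipschitz bound on H along the circle
  have hHdiff : ∀ a b : ℝ, ‖H (zf a) - H (zf b)‖ ≤ M * |a - b| := by
    intro a b
    rw [hH, hH, ← Finset.sum_sub_distrib]
    refine le_trans (norm_sum_le _ _) ?_
    have hterm : ∀ w ∈ W,
        ‖c w * (1 - (‖w‖ : ℂ)^2) / (zf a - w)
          - c w * (1 - (‖w‖ : ℂ)^2) / (zf b - w)‖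
        ≤ ‖c w‖ * (r * |a - b|) := by
      intro w hw
      have hda := hsubρ _ (hzabs a) w hw
      have hdb := hsubρ _ (hzabs b) w hw
      have hza : zf a - w ≠ 0 := fun h => by simp [h] at hda
      have hzb : zf b - w ≠ 0 := fun h => by simp [h] at hdb
      have hid : c w * (1 - (‖w‖ : ℂ)^2) / (zf a - w)
          - c w * (1 - (‖w‖ : ℂ)^2) / (zf b - w)
          = c w * (1 - (‖w‖ : ℂ)^2) * ((zf b - zf a) / ((zf a - w) * (zf b - w))) := by
        field_simp
        ring
      rw [hid, norm_mul, norm_mul, norm_div, norm_mul, hA w hw]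
      have hT : ‖zf b - zf a‖ ≤ |a - b| := by
        have := abs_exp_sub_exp_le b a
        rw [abs_sub_comm] at this
        exact this
      have hkey : (1 - (‖w‖)^2) / (‖zf a - w‖ * ‖zf b - w‖)
          ≤ r := by
        rw [hrdef, div_le_div_iff₀ (mul_pos hda hdb) hρ1]
        have h1 := hsub _ (hzabs a) w hw
        have h2 := hsub _ (hzabs b) w hw
        have h3 := hW w hw
        have h4 := norm_nonneg w
        have h5 : (1 - ‖w‖) * (1 - ‖w‖)
            ≤ ‖zf a - w‖ * ‖zf b - w‖ :=
          mul_le_mul h1 h2 (by linarith) (by linarith)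
        nlinarith [mul_nonneg (sub_nonneg.2 h3) (by linarith : (0:ℝ) ≤ 1 - ‖w‖)]
      calc ‖c w‖ * (1 - ‖w‖ ^ 2)
            * (‖zf b - zf a‖ / (‖zf a - w‖ * ‖zf b - w‖))
          = ‖c w‖ * (‖zf b - zf a‖
            * ((1 - ‖w‖ ^ 2) / (‖zf a - w‖ * ‖zf b - w‖))) := by
            ring
        _ ≤ ‖c w‖ * (|a - b| * r) := by
            refine mul_le_mul_of_nonneg_left ?_ (norm_nonneg _)
            refine mul_le_mul hT hkey (div_nonneg (by nlinarith [norm_nonneg w, hW w hw]) (by positivity)) (abs_nonneg _)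
        _ = ‖c w‖ * (r * |a - b|) := by ring
    refine le_trans (Finset.sum_le_sum hterm) ?_
    rw [← Finset.sum_mul, hMdef]
    exact le_of_eq (by ring)
  -- oscillation bound
  have hosc : ∀ a b : ℝ, f a ≤ f b + L * |a - b| := by
    intro a b
    have hu := hHabs a
    have hv := hHabs b
    have hd := hHdiff a b
    have h1 : ‖H (zf a)‖ - ‖H (zf b)‖
        ≤ ‖H (zf a) - H (zf b)‖ := by
      have := norm_sub_norm_le (H (zf a)) (H (zf b))
      simpa using this
    have hu0 := norm_nonneg (H (zf a))
    have hv0 := norm_nonneg (H (zf b))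
    have hd0 := norm_nonneg (H (zf a) - H (zf b))
    have ht0 : (0:ℝ) ≤ |a - b| := abs_nonneg _
    have hB0 : 0 ≤ B := by rw [hBdef]; exact mul_nonneg (by linarith) hS0
    have hLM : 2 * B * M ≤ L := by
      rw [hBdef, hMdef, hLdef]
      have h : 0 ≤ r * S ^ 2 := mul_nonneg hr0 (sq_nonneg S)
      nlinarith [mul_nonneg h (by linarith : (0:ℝ) ≤ 1 - ρ)]
    have hMt : 0 ≤ M * |a - b| := by
      refine mul_nonneg ?_ ht0
      rw [hMdef]; exact mul_nonneg hr0 hS0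
    simp only [hf]
    nlinarith [mul_le_mul_of_nonneg_right hLM ht0,
      mul_le_mul_of_nonneg_right h1 (by linarith : (0:ℝ) ≤ ‖H (zf a)‖ + ‖H (zf b)‖),
      mul_le_mul hd (by linarith : ‖H (zf a)‖ + ‖H (zf b)‖ ≤ 2 * B) (by linarith) hMt]
  -- continuity
  have hcont : Continuous f := by
    have hHc : Continuous (fun θ : ℝ => H (zf θ)) := by
      have heq : (fun θ : ℝ => H (zf θ))
          = fun θ : ℝ => ∑ w ∈ W, c w * (1 - (‖w‖ : ℂ)^2) / (zf θ - w) :=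
        funext fun θ => hH _
      rw [heq]
      refine continuous_finset_sum _ fun w hw => ?_
      refine Continuous.div continuous_const ?_ ?_
      · exact (Complex.continuous_exp.comp ((Complex.continuous_ofReal).mul continuous_const)).sub
          continuous_const
      · intro θ
        exact fun h => by simpa [h] using hsubρ _ (hzabs θ) w hw
    exact (continuous_norm.comp hHc).pow 2
  -- partition points
  have hn0 : (0:ℝ) < n := by exact_mod_cast hn
  have hnne : (n:ℝ) ≠ 0 := ne_of_gt hn0
  set a : ℕ → ℝ := fun k => 2 * π * k / n with hadef
  set h : ℝ := 2 * π / n with hhdef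
  have hh0 : 0 ≤ h := by rw [hhdef]; positivity
  have hstep : ∀ k : ℕ, a (k + 1) = a k + h := by
    intro k
    rw [hadef, hhdef]
    push_cast
    field_simp
  have ha0 : a 0 = 0 := by simp [hadef]
  have han : a n = 2 * π := by rw [hadef]; field_simp
  have hint : ∀ k : ℕ, IntervalIntegrable f MeasureTheory.volume (a k) (a (k + 1)) :=
    fun k => hcont.intervalIntegrable _ _
  have hsplit : ∑ k ∈ Finset.range n, ∫ x in (a k)..(a (k + 1)), f x
      = ∫ x in (0:ℝ)..(2 * π), f x := by
    rw [← ha0, ← han]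
    exact intervalIntegral.sum_integral_adjacent_intervals fun k _ => hint k
  -- per-interval bound
  have hper : ∀ k : ℕ, (∫ x in (a k)..(a (k + 1)), f x) ≤ f (a k) * h + L * h ^ 2 / 2 := by
    intro k
    have hle : a k ≤ a (k + 1) := by rw [hstep]; linarith
    have hg : IntervalIntegrable (fun x => f (a k) + L * (x - a k)) MeasureTheory.volume
        (a k) (a (k + 1)) :=
      (continuous_const.add (continuous_const.mul
        ((continuous_id).sub continuous_const))).intervalIntegrable _ _
    have hmono : ∀ x ∈ Set.Icc (a k) (a (k + 1)), f x ≤ f (a k) + L * (x - a k) := by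
      intro x hx
      have := hosc x (a k)
      rwa [_root_.abs_of_nonneg (by linarith [hx.1])] at this
    refine le_trans (intervalIntegral.integral_mono_on hle (hint k) hg hmono) ?_
    have hcalc : (∫ x in (a k)..(a (k + 1)), (f (a k) + L * (x - a k)))
        = f (a k) * h + L * h ^ 2 / 2 := by
      have heqf : (fun x : ℝ => f (a k) + L * (x - a k))
          = fun x : ℝ => (f (a k) - L * a k) + L * x := by
        funext x; ring
      rw [heqf, intervalIntegral.integral_add (f := fun _ => f (a k) - L * a k) (g := fun x => L * x) (intervalIntegrable_const)
        ((continuous_const.mul continuous_id').intervalIntegrable _ _),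
        intervalIntegral.integral_const, intervalIntegral.integral_const_mul,
        integral_id, hstep k]
      simp only [smul_eq_mul]
      ring
    rw [hcalc]
  -- sum up
  have hsum : (∫ x in (0:ℝ)..(2 * π), f x)
      ≤ h * (∑ k ∈ Finset.range n, f (a k)) + n * (L * h ^ 2 / 2) := by
    rw [← hsplit]
    refine le_trans (Finset.sum_le_sum fun k _ => hper k) ?_
    rw [Finset.sum_add_distrib, Finset.sum_const, Finset.card_range, ← Finset.sum_mul]
    simp [mul_comm]
  -- identify the sums
  have hsums : (∑ k ∈ Finset.range n, f (a k))
      = ∑ k ∈ Finset.range n,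
          (‖H (Complex.exp ((2 * π * k / n) * Complex.I))‖)^2 := by
    refine Finset.sum_congr rfl fun k _ => ?_
    have : ((2 * π * k / n : ℝ) : ℂ) = 2 * (π:ℂ) * k / n := by push_cast; ring
    simp only [hf, hzf, hadef, this]
  -- final arithmetic
  have hπ : (0:ℝ) < π := Real.pi_pos
  have hmain : (1 / (2 * π)) * ∫ x in (0:ℝ)..(2 * π), f x
      ≤ (1 / (2 * π)) * (h * (∑ k ∈ Finset.range n, f (a k)) + n * (L * h ^ 2 / 2)) :=
    mul_le_mul_of_nonneg_left hsum (by positivity)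
  refine le_trans hmain ?_
  rw [hsums]
  rw [hhdef, hLdef, hrdef, hSdef]
  have heq : (1 / (2 * π)) * ((2 * π / n) * (∑ k ∈ Finset.range n,
          (‖H (Complex.exp ((2 * π * k / n) * Complex.I))‖)^2)
        + n * ((4 * ((1 + ρ) / (1 - ρ)) * (∑ w ∈ W, ‖c w‖) ^ 2) * (2 * π / n) ^ 2 / 2))
      = (1 / n) * ∑ k ∈ Finset.range n,
            (‖H (Complex.exp ((2 * π * k / n) * Complex.I))‖)^2
        + (4 * π / n) * ((1 + ρ) / (1 - ρ)) * (∑ w ∈ W, ‖c w‖)^2 := by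
    generalize (∑ k ∈ Finset.range n, (‖H (Complex.exp ((2 * π * k / n) * Complex.I))‖)^2) = T
    field_simp
  rw [heq]
end

section
/- Denoising error bound via dual norm: let ‖·‖_Q be a norm on ℝⁿ, y = x⋆ + ω, and let x̂ minimize f(x) = ½‖x - y‖₂² + μ‖x‖_Q with μ ≥ ‖ω‖_Q* (the dual norm of the noise). Then ‖x̂ - x⋆‖₂² ≤ 2μ‖x⋆‖_Q. -/
open scoped RealInnerProductSpace

/-- The dual norm of a (semi)norm on Euclidean space. -/
noncomputable def dualNorm {n : ℕ} (Q : Seminorm ℝ (EuclideanSpace ℝ (Fin n)))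
    (z : EuclideanSpace ℝ (Fin n)) : ℝ :=
  sSup {r : ℝ | ∃ x : EuclideanSpace ℝ (Fin n), Q x ≤ 1 ∧ r = ⟪x, z⟫}

/-- Type synonym carrying the norm `Q`. -/
def QSpace {n : ℕ} (_Q : Seminorm ℝ (EuclideanSpace ℝ (Fin n))) : Type :=
  EuclideanSpace ℝ (Fin n)

instance {n : ℕ} (Q : Seminorm ℝ (EuclideanSpace ℝ (Fin n))) : AddCommGroup (QSpace Q) :=
  inferInstanceAs (AddCommGroup (EuclideanSpace ℝ (Fin n)))

noncomputable instance {n : ℕ} (Q : Seminorm ℝ (EuclideanSpace ℝ (Fin n))) :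
    Module ℝ (QSpace Q) :=
  inferInstanceAs (Module ℝ (EuclideanSpace ℝ (Fin n)))

noncomputable instance {n : ℕ} (Q : Seminorm ℝ (EuclideanSpace ℝ (Fin n))) :
    Norm (QSpace Q) := ⟨fun x => Q x⟩

instance {n : ℕ} (Q : Seminorm ℝ (EuclideanSpace ℝ (Fin n))) :
    FiniteDimensional ℝ (QSpace Q) :=
  inferInstanceAs (FiniteDimensional ℝ (EuclideanSpace ℝ (Fin n)))

/-- Norm equivalence in finite dimensions: the Euclidean norm is bounded by `Q`. -/
theorem exists_norm_le_const_mul_seminorm {n : ℕ} (Q : Seminorm ℝ (EuclideanSpace ℝ (Fin n)))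
    (hQ : ∀ x, Q x = 0 → x = 0) :
    ∃ C : ℝ, 0 ≤ C ∧ ∀ x : EuclideanSpace ℝ (Fin n), ‖x‖ ≤ C * Q x := by
  have core : NormedSpace.Core ℝ (QSpace Q) :=
    { norm_nonneg := fun x => apply_nonneg Q x
      norm_smul := fun c x => by
        show Q (c • x) = ‖c‖ * Q x
        exact map_smul_eq_mul Q c x
      norm_triangle := fun x y => map_add_le_add Q x y
      norm_eq_zero_iff := fun x => by
        constructor
        · exact fun h => hQ x h
        · intro h; show Q x = 0; rw [show (x : EuclideanSpace ℝ (Fin n)) = 0 from h]; exact map_zero Q }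
  letI : NormedAddCommGroup (QSpace Q) := NormedAddCommGroup.ofCore core
  letI : NormedSpace ℝ (QSpace Q) := NormedSpace.ofCore core
  let f : QSpace Q →ₗ[ℝ] EuclideanSpace ℝ (Fin n) :=
    { toFun := fun x => x
      map_add' := fun _ _ => rfl
      map_smul' := fun _ _ => rfl }
  let g := LinearMap.toContinuousLinearMap f
  exact ⟨‖g‖, norm_nonneg g, fun x => g.le_opNorm x⟩

theorem inner_le_dualNorm_mul {n : ℕ} (Q : Seminorm ℝ (EuclideanSpace ℝ (Fin n)))
    (hQ : ∀ x, Q x = 0 → x = 0) (ω h : EuclideanSpace ℝ (Fin n)) :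
    ⟪h, ω⟫ ≤ dualNorm Q ω * Q h ∧ 0 ≤ dualNorm Q ω := by
  obtain ⟨C, hC0, hC⟩ := exists_norm_le_const_mul_seminorm Q hQ
  set S := {r : ℝ | ∃ x : EuclideanSpace ℝ (Fin n), Q x ≤ 1 ∧ r = ⟪x, ω⟫} with hS
  have hbdd : BddAbove S := by
    refine ⟨C * ‖ω‖, ?_⟩
    rintro r ⟨x, hx1, rfl⟩
    calc ⟪x, ω⟫ ≤ ‖x‖ * ‖ω‖ := real_inner_le_norm x ω
      _ ≤ (C * Q x) * ‖ω‖ := by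
          apply mul_le_mul_of_nonneg_right (hC x) (norm_nonneg _)
      _ ≤ (C * 1) * ‖ω‖ := by
          apply mul_le_mul_of_nonneg_right _ (norm_nonneg _)
          exact mul_le_mul_of_nonneg_left hx1 hC0
      _ = C * ‖ω‖ := by ring
  have h0 : (0 : ℝ) ∈ S := ⟨0, by simp [map_zero], by simp⟩
  have hdn0 : 0 ≤ dualNorm Q ω := le_csSup hbdd h0
  refine ⟨?_, hdn0⟩
  rcases eq_or_lt_of_le (apply_nonneg Q h) with hQh | hQh
  · have : h = 0 := hQ h hQh.symm
    simp [this, ← hQh]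
  · have hmem : ⟪(Q h)⁻¹ • h, ω⟫ ∈ S := by
      refine ⟨(Q h)⁻¹ • h, ?_, rfl⟩
      rw [map_smul_eq_mul]
      rw [Real.norm_eq_abs, abs_of_pos (inv_pos.mpr hQh), inv_mul_cancel₀ hQh.ne']
    have hle : ⟪(Q h)⁻¹ • h, ω⟫ ≤ dualNorm Q ω := le_csSup hbdd hmem
    rw [real_inner_smul_left] at hle
    calc ⟪h, ω⟫ = Q h * ((Q h)⁻¹ * ⟪h, ω⟫) := by field_simp
      _ ≤ Q h * dualNorm Q ω := mul_le_mul_of_nonneg_left hle hQh.le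
      _ = dualNorm Q ω * Q h := mul_comm _ _

theorem denoising_error_bound {n : ℕ} (Q : Seminorm ℝ (EuclideanSpace ℝ (Fin n)))
    (hQ : ∀ x, Q x = 0 → x = 0)
    (xstar ω : EuclideanSpace ℝ (Fin n)) (μ : ℝ) (hμ : dualNorm Q ω ≤ μ)
    (xhat : EuclideanSpace ℝ (Fin n))
    (hopt : ∀ x : EuclideanSpace ℝ (Fin n),
      (1 / 2) * ‖xhat - (xstar + ω)‖^2 + μ * Q xhat
        ≤ (1 / 2) * ‖x - (xstar + ω)‖^2 + μ * Q x) :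
    ‖xhat - xstar‖^2 ≤ 2 * μ * Q xstar := by
  obtain ⟨hinner, hdn0⟩ := inner_le_dualNorm_mul Q hQ ω (xhat - xstar)
  have hμ0 : 0 ≤ μ := le_trans hdn0 hμ
  set A : ℝ := ⟪xhat - (xstar + ω), xstar - xhat⟫ + μ * (Q xstar - Q xhat) with hA
  set B : ℝ := (1/2) * ‖xstar - xhat‖^2 with hB
  have hB0 : 0 ≤ B := by positivity
  -- key inequality along the segment
  have hkey : ∀ t : ℝ, 0 < t → t ≤ 1 → 0 ≤ t * A + t^2 * B := by
    intro t ht0 ht1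
    have hx := hopt (xhat + t • (xstar - xhat))
    have hnorm : ‖xhat + t • (xstar - xhat) - (xstar + ω)‖^2
        = ‖xhat - (xstar + ω)‖^2 + 2*t*⟪xhat - (xstar+ω), xstar - xhat⟫
          + t^2 * ‖xstar - xhat‖^2 := by
      have e : xhat + t • (xstar - xhat) - (xstar + ω)
          = (xhat - (xstar + ω)) + t • (xstar - xhat) := by module
      rw [e, norm_add_sq_real, real_inner_smul_right, norm_smul, Real.norm_eq_abs,
        abs_of_pos ht0, mul_pow]
      ring
    have hconv : Q (xhat + t • (xstar - xhat)) ≤ (1-t) * Q xhat + t * Q xstar := by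
      have e : xhat + t • (xstar - xhat) = (1-t) • xhat + t • xstar := by module
      rw [e]
      calc Q ((1-t) • xhat + t • xstar) ≤ Q ((1-t) • xhat) + Q (t • xstar) :=
            map_add_le_add Q _ _
        _ = (1-t) * Q xhat + t * Q xstar := by
            rw [map_smul_eq_mul, map_smul_eq_mul, Real.norm_eq_abs, Real.norm_eq_abs,
              abs_of_nonneg (by linarith), abs_of_pos ht0]
    have hmul : μ * Q (xhat + t • (xstar - xhat)) ≤ μ * ((1-t) * Q xhat + t * Q xstar) :=
      mul_le_mul_of_nonneg_left hconv hμ0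
    rw [hnorm] at hx
    rw [hA, hB]
    nlinarith [hx, hmul]
  -- deduce 0 ≤ A
  have hA0 : 0 ≤ A := by
    by_contra hA'
    push_neg at hA'
    rcases eq_or_lt_of_le hB0 with hBz | hBz
    · have := hkey 1 one_pos le_rfl
      nlinarith
    · set t : ℝ := min 1 (-A / (2*B)) with ht
      have ht0 : 0 < t := lt_min one_pos (div_pos (by linarith) (by positivity))
      have ht1 : t ≤ 1 := min_le_left _ _
      have htB : t ≤ -A / (2*B) := min_le_right _ _
      have := hkey t ht0 ht1
      have hBne : B ≠ 0 := hBz.ne'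
      have heq : (-A / (2*B)) * B = -A / 2 := by field_simp
      have htB' : t * B ≤ -A / 2 := by
        rw [← heq]
        exact mul_le_mul_of_nonneg_right htB hBz.le
      nlinarith
  -- unfold A and conclude
  have einner : ⟪xhat - (xstar + ω), xstar - xhat⟫
      = -‖xhat - xstar‖^2 + ⟪xhat - xstar, ω⟫ := by
    have e1 : xhat - (xstar + ω) = (xhat - xstar) - ω := by abel
    have e2 : xstar - xhat = -(xhat - xstar) := by abel
    rw [e1, e2, inner_neg_right, inner_sub_left, real_inner_self_eq_norm_sq,
      real_inner_comm ω (xhat - xstar)]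
    ring
  have hQsub : Q (xhat - xstar) ≤ Q xhat + Q xstar := map_sub_le_add Q xhat xstar
  have hiμ : ⟪xhat - xstar, ω⟫ ≤ μ * (Q xhat + Q xstar) := by
    calc ⟪xhat - xstar, ω⟫ ≤ dualNorm Q ω * Q (xhat - xstar) := hinner
      _ ≤ μ * Q (xhat - xstar) := mul_le_mul_of_nonneg_right hμ (apply_nonneg Q _)
      _ ≤ μ * (Q xhat + Q xstar) := mul_le_mul_of_nonneg_left hQsub hμ0
  rw [hA, einner] at hA0
  linarith
end
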